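/- Under the hypotheses of the main theorem, the Gauss–Newton map G_F(x) = x − F'(x)†F(x) satisfies ‖G_F(x) − x*‖ ≤ |n_f(‖x − x*‖)| for all x ∈ B(x*, r), and consequently G_F maps B(x*, r) into itself. -/

import Mathlib

/-- Moore–Penrose inverse of an injective closed-range operator: A† = (A*A)⁻¹ A*. -/
noncomputable def pinv {X Y : Type*} [NormedAddCommGroup X] [InnerProductSpace ℝ X]
    [CompleteSpace X] [NormedAddCommGroup Y] [InnerProductSpace ℝ Y] [CompleteSpace Y]
    (A : X →L[ℝ] Y) : Y →L[ℝ] X :=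
  (Ring.inverse ((ContinuousLinearMap.adjoint A).comp A)).comp (ContinuousLinearMap.adjoint A)

open ContinuousLinearMap in
lemma pinv_prop {X Y : Type*} [NormedAddCommGroup X] [InnerProductSpace ℝ X]
    [CompleteSpace X] [NormedAddCommGroup Y] [InnerProductSpace ℝ Y] [CompleteSpace Y]
    (A : X →L[ℝ] Y) {c : ℝ} (hc : 0 < c) (hlow : ∀ u, c * ‖u‖ ≤ ‖A u‖) :
    (∀ u, pinv A (A u) = u) ∧ (∀ y, c * ‖pinv A y‖ ≤ ‖y‖) := by
  set T : X →L[ℝ] X := (ContinuousLinearMap.adjoint A).comp A with hTdef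
  have hTinner : ∀ u, inner ℝ (T u) u = (‖A u‖ : ℝ) ^ 2 := fun u => by
    rw [hTdef, ContinuousLinearMap.comp_apply, ContinuousLinearMap.adjoint_inner_left,
      real_inner_self_eq_norm_sq]
  have hlow2 : ∀ u, c ^ 2 * ‖u‖ ^ 2 ≤ inner ℝ (T u) u := fun u => by
    rw [hTinner]
    have h := hlow u
    have h2 : 0 ≤ c * ‖u‖ := by positivity
    nlinarith [norm_nonneg u, norm_nonneg (A u), mul_le_mul h h h2 (norm_nonneg (A u))]
  have hTlow : ∀ u, c ^ 2 * ‖u‖ ≤ ‖T u‖ := fun u => by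
    rcases eq_or_ne u 0 with rfl | hu
    · simp
    · have h1 : inner ℝ (T u) u ≤ ‖T u‖ * ‖u‖ := real_inner_le_norm _ _
      have h2 := hlow2 u
      have h3 : 0 < ‖u‖ := norm_pos_iff.mpr hu
      nlinarith
  have hTinj : Function.Injective T := by
    intro u v huv
    have h := hTlow (u - v)
    rw [map_sub, huv, sub_self, norm_zero] at h
    have : ‖u - v‖ ≤ 0 := by nlinarith [norm_nonneg (u - v), pow_pos hc 2]
    have := le_antisymm this (norm_nonneg _)
    rwa [norm_eq_zero, sub_eq_zero] at this
  have hanti : AntilipschitzWith (⟨(c ^ 2)⁻¹, by positivity⟩ : NNReal) T := by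
    apply AntilipschitzWith.of_le_mul_dist
    intro u v
    have h := hTlow (u - v)
    rw [dist_eq_norm, dist_eq_norm, ← map_sub]
    have hc2 : (0:ℝ) < c ^ 2 := by positivity
    change ‖u - v‖ ≤ (c ^ 2)⁻¹ * ‖T (u - v)‖
    rw [inv_mul_eq_div, le_div_iff₀ hc2]
    nlinarith [h]
  have hclosedT : IsClosed (Set.range (T : X → X)) :=
    hanti.isClosed_range T.uniformContinuous
  have hclosedK : IsClosed ((LinearMap.range (T : X →ₗ[ℝ] X) : Submodule ℝ X) : Set X) := by
    have : ((LinearMap.range (T : X →ₗ[ℝ] X) : Submodule ℝ X) : Set X) = Set.range (T : X → X) := by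
      ext z; simp [LinearMap.mem_range]
    rw [this]; exact hclosedT
  haveI : CompleteSpace (LinearMap.range (T : X →ₗ[ℝ] X) : Submodule ℝ X) := hclosedK.completeSpace_coe
  have horth : (LinearMap.range (T : X →ₗ[ℝ] X))ᗮ = ⊥ := by
    rw [Submodule.eq_bot_iff]
    intro y hy
    have h0 : inner ℝ (T y) y = (0:ℝ) := by
      exact (Submodule.mem_orthogonal _ y).mp hy (T y) (LinearMap.mem_range_self _ y)
    have h := hlow2 y
    rw [h0] at h
    have : ‖y‖ ^ 2 ≤ 0 := by nlinarith [pow_pos hc 2, sq_nonneg ‖y‖]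
    have : ‖y‖ = 0 := by nlinarith [norm_nonneg y, sq_nonneg ‖y‖]
    rwa [norm_eq_zero] at this
  have hsurj : LinearMap.range (T : X →ₗ[ℝ] X) = ⊤ := Submodule.orthogonal_eq_bot_iff.mp horth
  have hU : IsUnit T := ContinuousLinearMap.isUnit_iff_bijective.mpr
    ⟨hTinj, LinearMap.range_eq_top.mp hsurj⟩
  have hinvT : Ring.inverse T * T = 1 := Ring.inverse_mul_cancel _ hU
  have hTinv : T * Ring.inverse T = 1 := Ring.mul_inverse_cancel _ hU
  have hid : ∀ u, pinv A (A u) = u := by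
    intro u
    have h : pinv A (A u) = (Ring.inverse T) (T u) := rfl
    rw [h, ← ContinuousLinearMap.mul_apply, hinvT, ContinuousLinearMap.one_apply]
  refine ⟨hid, fun y => ?_⟩
  set u := pinv A y with hu
  have hTu : T u = ContinuousLinearMap.adjoint A y := by
    have h : T u = (T * Ring.inverse T) (ContinuousLinearMap.adjoint A y) := rfl
    rw [h, hTinv, ContinuousLinearMap.one_apply]
  have h1 : (‖A u‖:ℝ) ^ 2 ≤ ‖y‖ * ‖A u‖ := by
    have h2 : inner ℝ (T u) u = (inner ℝ y (A u) : ℝ) := by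
      rw [hTu, ContinuousLinearMap.adjoint_inner_left]
    have h3 : (inner ℝ y (A u) : ℝ) ≤ ‖y‖ * ‖A u‖ := real_inner_le_norm _ _
    rw [← hTinner u, h2]; exact h3
  have h4 := hlow u
  nlinarith [norm_nonneg (A u), norm_nonneg y, norm_nonneg u]

open ContinuousLinearMap in
lemma lower_bound_of_injective_closed_range {X Y : Type*} [NormedAddCommGroup X]
    [InnerProductSpace ℝ X] [CompleteSpace X] [NormedAddCommGroup Y] [InnerProductSpace ℝ Y]
    [CompleteSpace Y] (A : X →L[ℝ] Y) (hinj : Function.Injective (A : X → Y))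
    (hcl : IsClosed (Set.range (A : X → Y))) :
    ∃ c : ℝ, 0 < c ∧ ∀ u, c * ‖u‖ ≤ ‖A u‖ := by
  set K : Submodule ℝ Y := LinearMap.range (A : X →ₗ[ℝ] Y) with hK
  have hclK : IsClosed (K : Set Y) := by
    have : (K : Set Y) = Set.range (A : X → Y) := by ext z; simp [hK, LinearMap.mem_range]
    rw [this]; exact hcl
  haveI : CompleteSpace K := hclK.completeSpace_coe
  set A' : X →L[ℝ] K := A.codRestrict K (fun x => LinearMap.mem_range_self _ x) with hA'
  have hker : A'.ker = ⊥ := by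
    have hinj' : Function.Injective A' := by
      intro u v huv
      apply hinj
      have : (A' u : Y) = (A' v : Y) := by rw [huv]
      simpa [hA', ContinuousLinearMap.coe_codRestrict_apply] using this
    exact LinearMap.ker_eq_bot.mpr hinj'
  have hrange : A'.range = ⊤ := by
    rw [LinearMap.range_eq_top]
    rintro ⟨y, x, rfl⟩
    exact ⟨x, rfl⟩
  set e := ContinuousLinearEquiv.ofBijective A' hker hrange with he
  set M : ℝ := ‖(e.symm : K →L[ℝ] X)‖ with hM
  refine ⟨(M + 1)⁻¹, by positivity, fun u => ?_⟩
  have h1 : ‖u‖ ≤ M * ‖A' u‖ := by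
    have heu : A' u = e u :=
      (congrFun (ContinuousLinearEquiv.coeFn_ofBijective A' hker hrange) u).symm
    have h2 : (e.symm : K →L[ℝ] X) (A' u) = u := by
      rw [ContinuousLinearEquiv.coe_coe, heu, ContinuousLinearEquiv.symm_apply_apply]
    calc ‖u‖ = ‖(e.symm : K →L[ℝ] X) (A' u)‖ := by rw [h2]
      _ ≤ M * ‖A' u‖ := (e.symm : K →L[ℝ] X).le_opNorm _
  have h3 : ‖A' u‖ = ‖A u‖ := rfl
  rw [h3] at h1
  have hM0 : 0 ≤ M := norm_nonneg _
  rw [inv_mul_eq_div, div_le_iff₀ (by positivity)]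
  nlinarith [norm_nonneg (A u), norm_nonneg u]

set_option maxHeartbeats 2000000 in
theorem stmt11
    {X Y : Type*} [NormedAddCommGroup X] [InnerProductSpace ℝ X] [CompleteSpace X]
    [NormedAddCommGroup Y] [InnerProductSpace ℝ Y] [CompleteSpace Y]
    (Ω : Set X) (hΩ : IsOpen Ω) (F : X → Y) (Fp : X → X →L[ℝ] Y)
    (hF : ∀ x ∈ Ω, HasFDerivAt F (Fp x) x)
    (hclosed : ∀ x ∈ Ω, IsClosed (Set.range ((Fp x) : X → Y)))
    (xs : X) (hxs : xs ∈ Ω) (hFxs : F xs = 0) (hinj : Function.Injective ((Fp xs) : X → Y))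
    (R : ℝ) (hR : 0 < R)
    (β κ : ℝ) (hβ : β = ‖pinv (Fp xs)‖)
    (hκ : κ = sSup {t ∈ Set.Ico 0 R | Metric.ball xs t ⊆ Ω})
    (f fp : ℝ → ℝ)
    (hderiv : ∀ t ∈ Set.Ico (0:ℝ) R, HasDerivWithinAt f (fp t) (Set.Ico 0 R) t)
    (hcont : ContinuousOn fp (Set.Ico 0 R))
    (hmaj : ∀ τ ∈ Set.Icc (0:ℝ) 1, ∀ x ∈ Metric.ball xs κ,
      β * ‖Fp x - Fp (xs + τ • (x - xs))‖ ≤ fp ‖x - xs‖ - fp (τ * ‖x - xs‖))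
    (hf0 : f 0 = 0) (hfp0 : fp 0 = -1) (hmono : StrictMonoOn fp (Set.Ico 0 R))
    (ν ρ r : ℝ) (hν : ν = sSup {t ∈ Set.Ico 0 R | fp t < 0})
    (hρ : ρ = sSup {δ : ℝ | δ ∈ Set.Ioo 0 ν ∧ ∀ t ∈ Set.Ioo 0 δ, (f t / fp t - t) / t < 1})
    (hr : r = min κ ρ) :
    (∀ x ∈ Metric.ball xs r,
        ‖(x - pinv (Fp x) (F x)) - xs‖ ≤ |‖x - xs‖ - f ‖x - xs‖ / fp ‖x - xs‖|) ∧
      ∀ x ∈ Metric.ball xs r, x - pinv (Fp x) (F x) ∈ Metric.ball xs r := by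
  have hκball : Metric.ball xs κ ⊆ Ω := by
    intro y hy
    rw [Metric.mem_ball] at hy
    have hne : Set.Nonempty {t ∈ Set.Ico (0:ℝ) R | Metric.ball xs t ⊆ Ω} :=
      ⟨0, ⟨le_rfl, hR⟩, by rw [Metric.ball_eq_empty.mpr le_rfl]; exact Set.empty_subset _⟩
    obtain ⟨u, ⟨hu1, hu2⟩, hyu⟩ := exists_lt_of_lt_csSup hne (hκ ▸ hy)
    exact hu2 (Metric.mem_ball.mpr hyu)
  have hrκ : r ≤ κ := hr ▸ min_le_left _ _
  have hballΩ : Metric.ball xs r ⊆ Ω := (Metric.ball_subset_ball hrκ).trans hκball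
  have key : ∀ x ∈ Metric.ball xs r,
      ‖(x - pinv (Fp x) (F x)) - xs‖ ≤ |‖x - xs‖ - f ‖x - xs‖ / fp ‖x - xs‖| ∧
      ‖(x - pinv (Fp x) (F x)) - xs‖ < r := by
    intro x hx
    have hdist : ‖x - xs‖ < r := by rw [Metric.mem_ball, dist_eq_norm] at hx; exact hx
    rcases eq_or_ne x xs with rfl | hnex
    · have h0 : (0:ℝ) < r := by rw [Metric.mem_ball] at hx; simpa using hx
      constructor
      · simp [hFxs, hf0]
      · simpa [hFxs] using h0
    set d := x - xs with hd
    set t := ‖d‖ with ht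
    have ht0 : 0 < t := norm_pos_iff.mpr (sub_ne_zero.mpr hnex)
    have hrρ : r ≤ ρ := hr ▸ min_le_right _ _
    have htρ : t < ρ := lt_of_lt_of_le hdist hrρ
    have hSρne : Set.Nonempty {δ : ℝ | δ ∈ Set.Ioo 0 ν ∧
        ∀ s ∈ Set.Ioo 0 δ, (f s / fp s - s) / s < 1} := by
      by_contra hemp
      rw [Set.not_nonempty_iff_eq_empty] at hemp
      rw [hρ, hemp, Real.sSup_empty] at htρ
      linarith
    obtain ⟨δ, ⟨hδν, hδprop⟩, htδ⟩ := exists_lt_of_lt_csSup hSρne (hρ ▸ htρ)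
    have htν : t < ν := lt_trans htδ hδν.2
    have hSνne : Set.Nonempty {s ∈ Set.Ico (0:ℝ) R | fp s < 0} :=
      ⟨0, ⟨le_rfl, hR⟩, by rw [hfp0]; norm_num⟩
    obtain ⟨s, ⟨hsIco, hfps⟩, hts⟩ := exists_lt_of_lt_csSup hSνne (hν ▸ htν)
    have htR : t < R := lt_trans hts hsIco.2
    have htIco : t ∈ Set.Ico (0:ℝ) R := ⟨ht0.le, htR⟩
    have hfpt : fp t < 0 := lt_trans (hmono htIco hsIco hts) hfps
    have hfpne : fp t ≠ 0 := ne_of_lt hfpt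
    have hratio : (f t / fp t - t) / t < 1 := hδprop t ⟨ht0, htδ⟩
    have hxκ : x ∈ Metric.ball xs κ := by
      rw [Metric.mem_ball, dist_eq_norm]
      exact lt_of_lt_of_le hdist hrκ
    obtain ⟨c₀, hc₀, hA0⟩ := lower_bound_of_injective_closed_range (Fp xs) hinj (hclosed xs hxs)
    obtain ⟨hid0, hbd0⟩ := pinv_prop (Fp xs) hc₀ hA0
    have hβA : ∀ u : X, ‖u‖ ≤ β * ‖Fp xs u‖ := by
      intro u
      calc ‖u‖ = ‖pinv (Fp xs) (Fp xs u)‖ := by rw [hid0 u]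
        _ ≤ ‖pinv (Fp xs)‖ * ‖Fp xs u‖ := ContinuousLinearMap.le_opNorm _ _
        _ = β * ‖Fp xs u‖ := by rw [hβ]
    have hβpos : 0 < β := by
      by_contra hb
      push_neg at hb
      have h1 := hβA d
      nlinarith [norm_nonneg (Fp xs d), mul_nonpos_of_nonpos_of_nonneg hb (norm_nonneg (Fp xs d))]
    have hmaj0 := hmaj 0 ⟨le_rfl, zero_le_one⟩ x hxκ
    have hnear : β * ‖Fp x - Fp xs‖ ≤ fp t + 1 := by
      simp only [zero_smul, add_zero, zero_mul, hfp0, ← hd, ← ht] at hmaj0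
      linarith
    set c : ℝ := (-fp t) / β with hc
    have hcpos : 0 < c := div_pos (neg_pos.mpr hfpt) hβpos
    have hAx : ∀ u : X, c * ‖u‖ ≤ ‖Fp x u‖ := by
      intro u
      have h1 := hβA u
      have h2 : β * ‖Fp xs u - Fp x u‖ ≤ (fp t + 1) * ‖u‖ := by
        have h3 : ‖Fp xs u - Fp x u‖ = ‖(Fp x - Fp xs) u‖ := by
          rw [ContinuousLinearMap.sub_apply, norm_sub_rev]
        have h4 : ‖(Fp x - Fp xs) u‖ ≤ ‖Fp x - Fp xs‖ * ‖u‖ := ContinuousLinearMap.le_opNorm _ _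
        calc β * ‖Fp xs u - Fp x u‖ = β * ‖(Fp x - Fp xs) u‖ := by rw [h3]
          _ ≤ β * (‖Fp x - Fp xs‖ * ‖u‖) := mul_le_mul_of_nonneg_left h4 hβpos.le
          _ = (β * ‖Fp x - Fp xs‖) * ‖u‖ := by ring
          _ ≤ (fp t + 1) * ‖u‖ := mul_le_mul_of_nonneg_right hnear (norm_nonneg u)
      have h7 : ‖Fp xs u‖ - ‖Fp x u‖ ≤ ‖Fp xs u - Fp x u‖ := norm_sub_norm_le _ _
      rw [hc, div_mul_eq_mul_div, div_le_iff₀ hβpos]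
      nlinarith [h1, h2, mul_le_mul_of_nonneg_left h7 hβpos.le]
    obtain ⟨hidx, hbdx⟩ := pinv_prop (Fp x) hcpos hAx
    have hsegΩ : ∀ τ : ℝ, τ ∈ Set.Icc (0:ℝ) 1 → xs + τ • d ∈ Metric.ball xs r := by
      intro τ hτ
      rw [Metric.mem_ball, dist_eq_norm]
      have he : xs + τ • d - xs = τ • d := by abel
      rw [he, norm_smul, Real.norm_eq_abs, abs_of_nonneg hτ.1]
      have : τ * ‖d‖ ≤ 1 * ‖d‖ := mul_le_mul_of_nonneg_right hτ.2 (norm_nonneg d)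
      rw [one_mul] at this
      exact lt_of_le_of_lt this hdist
    have hsegderiv : ∀ τ ∈ Set.Icc (0:ℝ) 1,
        HasDerivAt (fun s : ℝ => F (xs + s • d)) (Fp (xs + τ • d) d) τ := by
      intro τ hτ
      have hmem : xs + τ • d ∈ Ω := hballΩ (hsegΩ τ hτ)
      have hγ : HasDerivAt (fun s : ℝ => xs + s • d) d τ := by
        simpa using ((hasDerivAt_id τ).smul_const d).const_add xs
      exact (hF _ hmem).comp_hasDerivAt τ hγ
    set ψ : ℝ → Y := fun τ => F (xs + τ • d) - τ • (Fp x d) with hψ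
    have hψderiv : ∀ τ ∈ Set.Icc (0:ℝ) 1,
        HasDerivAt ψ (Fp (xs + τ • d) d - Fp x d) τ := by
      intro τ hτ
      exact (hsegderiv τ hτ).sub (by simpa using (hasDerivAt_id τ).smul_const (Fp x d))
    have hψcont : ContinuousOn ψ (Set.Icc 0 1) :=
      fun τ hτ => ((hψderiv τ hτ).continuousAt).continuousWithinAt
    set Bf : ℝ → ℝ := fun τ => ((t * fp t) * τ - f (τ * t)) / β with hBf
    set Bf' : ℝ → ℝ := fun τ => (t * fp t - fp (τ * t) * t) / β with hBf'
    have hfc : ContinuousOn f (Set.Ico 0 R) := fun s hs => (hderiv s hs).continuousWithinAt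
    have hmul : ∀ τ : ℝ, τ ∈ Set.Icc (0:ℝ) 1 → τ * t ∈ Set.Ico (0:ℝ) R := by
      intro τ hτ
      refine ⟨mul_nonneg hτ.1 ht0.le, ?_⟩
      calc τ * t ≤ 1 * t := mul_le_mul_of_nonneg_right hτ.2 ht0.le
        _ = t := one_mul t
        _ < R := htR
    have hBcont : ContinuousOn Bf (Set.Icc 0 1) := by
      apply ContinuousOn.div_const
      exact (continuousOn_const.mul continuousOn_id).sub
        (hfc.comp (continuousOn_id.mul continuousOn_const) (fun τ hτ => hmul τ hτ))
    have hB'deriv : ∀ τ ∈ Set.Ico (0:ℝ) 1, HasDerivWithinAt Bf (Bf' τ) (Set.Ici τ) τ := by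
      intro τ hτ
      have hfd : HasDerivWithinAt f (fp (τ * t)) (Set.Ico 0 R) (τ * t) :=
        hderiv _ (hmul τ ⟨hτ.1, hτ.2.le⟩)
      have hm : HasDerivWithinAt (fun s : ℝ => s * t) t (Set.Icc τ 1) τ :=
        (hasDerivAt_mul_const t).hasDerivWithinAt
      have hmap : Set.MapsTo (fun s : ℝ => s * t) (Set.Icc τ 1) (Set.Ico (0:ℝ) R) :=
        fun s hs => hmul s ⟨le_trans hτ.1 hs.1, hs.2⟩
      have hcomp : HasDerivWithinAt (fun s : ℝ => f (s * t)) (fp (τ * t) * t) (Set.Icc τ 1) τ :=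
        HasDerivWithinAt.comp τ hfd hm hmap
      have hcomp' : HasDerivWithinAt (fun s : ℝ => f (s * t)) (fp (τ * t) * t) (Set.Ici τ) τ :=
        hcomp.mono_of_mem_nhdsWithin (Icc_mem_nhdsGE_of_mem ⟨le_rfl, hτ.2⟩)
      have hlin : HasDerivWithinAt (fun τ' : ℝ => (t * fp t) * τ') (t * fp t) (Set.Ici τ) τ := by
        simpa using ((hasDerivAt_id τ).const_mul (t * fp t)).hasDerivWithinAt
      exact (hlin.sub hcomp').div_const β
    have hbound : ∀ τ ∈ Set.Ico (0:ℝ) 1, ‖Fp (xs + τ • d) d - Fp x d‖ ≤ Bf' τ := by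
      intro τ hτ
      have hm := hmaj τ ⟨hτ.1, hτ.2.le⟩ x hxκ
      rw [← hd, ← ht] at hm
      have h1 : ‖Fp (xs + τ • d) d - Fp x d‖ = ‖(Fp x - Fp (xs + τ • d)) d‖ := by
        rw [ContinuousLinearMap.sub_apply, norm_sub_rev]
      have h2 : ‖(Fp x - Fp (xs + τ • d)) d‖ ≤ ‖Fp x - Fp (xs + τ • d)‖ * t :=
        ContinuousLinearMap.le_opNorm _ _
      rw [h1]
      simp only [hBf']
      rw [le_div_iff₀ hβpos]
      nlinarith [mul_le_mul_of_nonneg_right hm ht0.le,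
        mul_le_mul_of_nonneg_right h2 hβpos.le, norm_nonneg (Fp x - Fp (xs + τ • d))]
    have hxd : xs + d = x := by rw [hd]; abel
    have hψ1 : ‖F x - Fp x d‖ ≤ (t * fp t - f t) / β := by
      have h0 : ‖ψ 0‖ ≤ Bf 0 := by
        simp [hψ, hBf, hFxs, hf0]
      have hall := image_norm_le_of_norm_deriv_right_le_deriv_boundary' hψcont
        (fun τ hτ => (hψderiv τ ⟨hτ.1, hτ.2.le⟩).hasDerivWithinAt) h0 hBcont hB'deriv hbound
      have h1 := hall (Set.right_mem_Icc.mpr zero_le_one)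
      simpa [hψ, hBf, hxd] using h1
    have hGrep : x - pinv (Fp x) (F x) - xs = pinv (Fp x) (Fp x d - F x) := by
      rw [map_sub, hidx d, hd]
      abel
    have hnorm1 : c * ‖x - pinv (Fp x) (F x) - xs‖ ≤ (t * fp t - f t) / β := by
      rw [hGrep]
      calc c * ‖pinv (Fp x) (Fp x d - F x)‖ ≤ ‖Fp x d - F x‖ := hbdx _
        _ = ‖F x - Fp x d‖ := norm_sub_rev _ _
        _ ≤ (t * fp t - f t) / β := hψ1
    have hMnonneg : 0 ≤ t * fp t - f t := by
      have h1 : (0:ℝ) ≤ (t * fp t - f t) / β := le_trans (norm_nonneg _) hψ1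
      have h2 := (le_div_iff₀ hβpos).mp h1
      simpa using h2
    have hnorm1' : (-fp t) * ‖x - pinv (Fp x) (F x) - xs‖ ≤ t * fp t - f t := by
      have h1 := hnorm1
      rw [hc, div_mul_eq_mul_div, div_le_div_iff₀ hβpos hβpos] at h1
      exact le_of_mul_le_mul_right h1 hβpos
    have hbound2 : ‖x - pinv (Fp x) (F x) - xs‖ ≤ (t * fp t - f t) / (-fp t) := by
      rw [le_div_iff₀ (neg_pos.mpr hfpt), mul_comm]
      exact hnorm1'
    have habs : |t - f t / fp t| = (t * fp t - f t) / (-fp t) := by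
      have heq : t - f t / fp t = (t * fp t - f t) / fp t := by field_simp
      rw [heq, abs_div, abs_of_nonneg hMnonneg, abs_of_neg hfpt]
    refine ⟨?_, ?_⟩
    · rw [habs]; exact hbound2
    · have h3 : f t / fp t - t < t := by
        have h4 := hratio
        rw [div_lt_one ht0] at h4
        linarith
      have heq2 : (t * fp t - f t) / (-fp t) = f t / fp t - t := by
        rw [div_eq_iff (neg_ne_zero.mpr hfpne)]
        field_simp
        ring
      exact lt_of_le_of_lt hbound2 (lt_trans (by rw [heq2]; exact h3) hdist)
  refine ⟨fun x hx => (key x hx).1, fun x hx => ?_⟩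
  rw [Metric.mem_ball, dist_eq_norm]
  exact (key x hx).2
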